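/- Let v and w be valuations on a superring R, with value groups Γ_v and Γ_w. Then w dominates v (i.e., there exists an order-preserving group homomorphism h : Γ_v → Γ_w, extended by h(∞) = ∞, with w = h ∘ v) if and only if supp(w) = supp(v), 𝔭_w ⊆ 𝔭_v, and A_v ⊆ A_w. -/

import Mathlib

universe u

/-- A superring: a `ZMod 2`-graded ring `R = R₀ ⊕ R₁` which is supercommutative
(`R₀` is central and every odd element squares to zero). -/
structure IsSuperring {R : Type*} [Ring R] (𝒜 : ZMod 2 → AddSubgroup R) : Prop where
  one_mem : (1 : R) ∈ 𝒜 0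
  mul_mem : ∀ {i j : ZMod 2} {x y : R}, x ∈ 𝒜 i → y ∈ 𝒜 j → x * y ∈ 𝒜 (i + j)
  decompose : ∀ x : R, ∃ x0 ∈ 𝒜 0, ∃ x1 ∈ 𝒜 1, x = x0 + x1
  unique_decomp : ∀ x0 ∈ 𝒜 0, ∀ x1 ∈ 𝒜 1, x0 + x1 = 0 → x0 = 0 ∧ x1 = 0
  even_central : ∀ x ∈ 𝒜 0, ∀ y : R, x * y = y * x
  odd_sq : ∀ x ∈ 𝒜 1, x * x = 0

/-- A (Manis) valuation on a ring `R`: a surjective map `v : R → Γ ∪ {∞}`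
(`∞ = ⊤` is absorbing and greater than every element of the totally ordered
abelian group `Γ`) with `v 0 = ∞`, `v 1 = 0`, `v (x*y) = v x + v y` and
`v (x+y) ≥ min (v x) (v y)`. -/
structure IsValuation {R : Type*} [Ring R] {Γ : Type*} [AddCommGroup Γ] [LinearOrder Γ] [IsOrderedAddMonoid Γ]
    (v : R → WithTop Γ) : Prop where
  surjective : Function.Surjective v
  map_zero : v 0 = ⊤
  map_one : v 1 = 0
  map_mul : ∀ x y : R, v (x * y) = v x + v y
  min_le_add : ∀ x y : R, min (v x) (v y) ≤ v (x + y)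

/-- `A_v = {x : v x ≥ 0}`. -/
def valRing {R : Type*} [Ring R] {Γ : Type*} [AddCommGroup Γ] [LinearOrder Γ] [IsOrderedAddMonoid Γ]
    (v : R → WithTop Γ) : Set R := {x : R | 0 ≤ v x}

/-- `𝔭_v = {x : v x > 0}`. -/
def valIdeal {R : Type*} [Ring R] {Γ : Type*} [AddCommGroup Γ] [LinearOrder Γ] [IsOrderedAddMonoid Γ]
    (v : R → WithTop Γ) : Set R := {x : R | 0 < v x}

/-- `supp v = v⁻¹(∞)`. -/
def valSupp {R : Type*} [Ring R] {Γ : Type*} [AddCommGroup Γ] [LinearOrder Γ] [IsOrderedAddMonoid Γ]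
    (v : R → WithTop Γ) : Set R := {x : R | v x = ⊤}

/-- `w` dominates `v` (i.e. `w = h ∘ v` for an order-preserving homomorphism `h`
of the value groups) iff `supp w = supp v`, `𝔭_w ⊆ 𝔭_v` and `A_v ⊆ A_w`. -/
theorem dominates_iff {R : Type u} [Ring R] [Nontrivial R]
    (𝒜 : ZMod 2 → AddSubgroup R) (hR : IsSuperring 𝒜)
    {Γ : Type*} [AddCommGroup Γ] [LinearOrder Γ] [IsOrderedAddMonoid Γ] {Δ : Type*} [AddCommGroup Δ] [LinearOrder Δ] [IsOrderedAddMonoid Δ]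
    (v : R → WithTop Γ) (hv : IsValuation v)
    (w : R → WithTop Δ) (hw : IsValuation w) :
    (∃ h : Γ →+ Δ, Monotone ⇑h ∧ ∀ x : R, w x = WithTop.map (⇑h) (v x)) ↔
      (valSupp w = valSupp v ∧ valIdeal w ⊆ valIdeal v ∧ valRing v ⊆ valRing w) := by
  constructor
  · rintro ⟨h, hmono, heq⟩
    refine ⟨?_, ?_, ?_⟩
    · ext x
      simp only [valSupp, Set.mem_setOf_eq, heq x, WithTop.map_eq_top_iff]
    · intro x hx
      simp only [valIdeal, Set.mem_setOf_eq, heq x] at hx ⊢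
      by_contra hle
      push_neg at hle
      have hne : v x ≠ ⊤ := by
        intro ht
        rw [ht] at hle
        simp at hle
      obtain ⟨γ, hγ⟩ := WithTop.ne_top_iff_exists.mp hne
      rw [← hγ] at hx hle
      have hγ0 : γ ≤ 0 := by exact_mod_cast hle
      have : h γ ≤ 0 := by simpa using hmono hγ0
      rw [WithTop.map_coe] at hx
      exact absurd hx (not_lt.mpr (by exact_mod_cast this))
    · intro x hx
      simp only [valRing, Set.mem_setOf_eq, heq x] at hx ⊢
      by_cases hne : v x = ⊤
      · rw [hne]; exact le_top
      · obtain ⟨γ, hγ⟩ := WithTop.ne_top_iff_exists.mp hne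
        rw [← hγ] at hx ⊢
        rw [WithTop.map_coe]
        have hγ0 : (0 : Γ) ≤ γ := by exact_mod_cast hx
        have : (0 : Δ) ≤ h γ := by simpa using hmono hγ0
        exact_mod_cast this
  · rintro ⟨hsupp, hideal, hring⟩
    -- supports agree pointwise
    have hsupp' : ∀ x : R, v x = ⊤ ↔ w x = ⊤ := by
      intro x
      constructor
      · intro hx; exact Set.ext_iff.mp hsupp x |>.mpr hx
      · intro hx; exact Set.ext_iff.mp hsupp x |>.mp hx
    -- key lemma: v a = 0 → w a = 0
    have key0 : ∀ a : R, v a = 0 → w a = 0 := by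
      intro a ha
      have h1 : 0 ≤ w a := hring (by simp [valRing, ha])
      have h2 : ¬ (0 < w a) := fun hlt => by
        have := hideal hlt
        simp only [valIdeal, Set.mem_setOf_eq, ha] at this
        exact lt_irrefl _ this
      exact le_antisymm (not_lt.mp h2) h1
    -- key lemma: monotonicity
    have key : ∀ x y : R, v x ≤ v y → w x ≤ w y := by
      intro x y hxy
      by_cases hvtop : v x = ⊤
      · have hvy : v y = ⊤ := top_le_iff.mp (hvtop ▸ hxy)
        rw [(hsupp' x).mp hvtop, (hsupp' y).mp hvy]
      · obtain ⟨γ, hvx⟩ := WithTop.ne_top_iff_exists.mp hvtop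
        have hvx : v x = ↑γ := hvx.symm
        obtain ⟨z, hz⟩ := hv.surjective (↑(-γ) : WithTop Γ)
        have hzx : v (z * x) = 0 := by
          rw [hv.map_mul, hz, hvx, ← WithTop.coe_add, neg_add_cancel, WithTop.coe_zero]
        have hwzx : w (z * x) = 0 := key0 _ hzx
        rw [hw.map_mul] at hwzx
        have hwz : w z ≠ ⊤ := fun ht => by simp [ht] at hwzx
        have hzy : (0 : WithTop Γ) ≤ v (z * y) := by
          rw [hv.map_mul, hz]
          calc (0 : WithTop Γ) = ↑(-γ) + ↑γ := by
                rw [← WithTop.coe_add, neg_add_cancel, WithTop.coe_zero]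
            _ ≤ ↑(-γ) + v y := add_le_add_right (hvx ▸ hxy) _
        have hwzy : 0 ≤ w (z * y) := hring hzy
        rw [hw.map_mul] at hwzy
        have : w z + w x ≤ w z + w y := by rw [hwzx]; exact hwzy
        exact (WithTop.add_le_add_iff_left hwz).mp this
    have keyeq : ∀ x y : R, v x = v y → w x = w y := fun x y hxy =>
      le_antisymm (key x y hxy.le) (key y x hxy.ge)
    -- section of v
    let sec : Γ → R := fun γ => (hv.surjective (↑γ : WithTop Γ)).choose
    have hsec : ∀ γ : Γ, v (sec γ) = ↑γ := fun γ => (hv.surjective _).choose_spec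
    have hwne : ∀ γ : Γ, w (sec γ) ≠ ⊤ := fun γ ht =>
      WithTop.coe_ne_top ((hsec γ).symm.trans ((hsupp' (sec γ)).mpr ht))
    let f : Γ → Δ := fun γ => (w (sec γ)).untop (hwne γ)
    have hf : ∀ γ : Γ, (↑(f γ) : WithTop Δ) = w (sec γ) := fun γ =>
      WithTop.coe_untop _ _
    have hfadd : ∀ γ δ : Γ, f (γ + δ) = f γ + f δ := by
      intro γ δ
      have h1 : v (sec (γ + δ)) = v (sec γ * sec δ) := by
        rw [hsec, hv.map_mul, hsec, hsec, WithTop.coe_add]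
      have h2 : w (sec (γ + δ)) = w (sec γ) + w (sec δ) := by
        rw [keyeq _ _ h1, hw.map_mul]
      have : (↑(f (γ + δ)) : WithTop Δ) = ↑(f γ + f δ) := by
        rw [hf, h2, ← hf γ, ← hf δ, WithTop.coe_add]
      exact_mod_cast this
    refine ⟨AddMonoidHom.mk' f hfadd, ?_, ?_⟩
    · intro γ δ hγδ
      have h1 : v (sec γ) ≤ v (sec δ) := by
        rw [hsec, hsec]; exact_mod_cast hγδ
      have h2 : (↑(f γ) : WithTop Δ) ≤ ↑(f δ) := by
        rw [hf, hf]; exact key _ _ h1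
      exact_mod_cast h2
    · intro x
      by_cases hvtop : v x = ⊤
      · rw [(hsupp' x).mp hvtop, hvtop]; rfl
      · obtain ⟨γ, hvx⟩ := WithTop.ne_top_iff_exists.mp hvtop
        have hvx : v x = ↑γ := hvx.symm
        have : w x = w (sec γ) := keyeq _ _ (by rw [hvx, hsec])
        rw [this, hvx, WithTop.map_coe, ← hf]
        rfl
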